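/- For any subgroup H of a finite group G and any central subgroup Z ≤ Z(G), one has d(HZ, G) = d(H, G). -/

import Mathlib

open scoped Pointwise


/-- The relative commutativity degree `d(H,G)` of a subgroup `H` of a group `G`. -/
noncomputable def relCommDeg {G : Type*} [Group G] (H : Subgroup G) : ℚ :=
  (Nat.card {p : H × G // (p.1 : G) * p.2 = p.2 * (p.1 : G)} : ℚ) /
    ((Nat.card H : ℚ) * (Nat.card G : ℚ))

/-- The set `D(G)` of all relative commutativity degrees of `G`. -/
noncomputable def commDegSet (G : Type*) [Group G] : Set ℚ :=
  {q | ∃ H : Subgroup G, relCommDeg H = q}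

section Aux

variable {G : Type*} [Group G]

/-- `N.subgroupOf K` is equivalent to `K ⊓ N`. -/
def subgroupOfEquivInf (K N : Subgroup G) : (N.subgroupOf K) ≃ (K ⊓ N : Subgroup G) where
  toFun x := ⟨(x.1 : G), ⟨x.1.2, x.2⟩⟩
  invFun x := ⟨⟨(x : G), x.2.1⟩, x.2.2⟩
  left_inv x := rfl
  right_inv x := rfl

/-- Product formula: `|K ⊔ N| * |K ⊓ N| = |K| * |N|` for `N` normal. -/
lemma card_sup_mul_card_inf [Finite G] (K N : Subgroup G) [N.Normal] :
    Nat.card (K ⊔ N : Subgroup G) * Nat.card (K ⊓ N : Subgroup G) =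
      Nat.card K * Nat.card N := by
  have e := QuotientGroup.quotientInfEquivProdNormalQuotient K N
  have h1 : Nat.card K = Nat.card (K ⧸ N.subgroupOf K) * Nat.card (K ⊓ N : Subgroup G) := by
    rw [Subgroup.card_eq_card_quotient_mul_card_subgroup (N.subgroupOf K),
      Nat.card_congr (subgroupOfEquivInf K N)]
  have h2 : Nat.card (K ⊔ N : Subgroup G) =
      Nat.card ((K ⊔ N : Subgroup G) ⧸ N.subgroupOf (K ⊔ N)) *
        Nat.card ((K ⊔ N) ⊓ N : Subgroup G) := by
    rw [Subgroup.card_eq_card_quotient_mul_card_subgroup (N.subgroupOf (K ⊔ N)),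
      Nat.card_congr (subgroupOfEquivInf (K ⊔ N) N)]
  have h3 : (K ⊔ N) ⊓ N = N := inf_eq_right.mpr le_sup_right
  have h4 : Nat.card (K ⧸ N.subgroupOf K) =
      Nat.card ((K ⊔ N : Subgroup G) ⧸ N.subgroupOf (K ⊔ N)) := Nat.card_congr e.toEquiv
  rw [h2, h3, h1, ← h4]
  ring

/-- The commuting-pairs subtype decomposes over `g : G` into centralizer intersections. -/
lemma card_comm_pairs [Fintype G] (H : Subgroup G) :
    Nat.card {p : H × G // (p.1 : G) * p.2 = p.2 * (p.1 : G)} =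
      ∑ g : G, Nat.card (H ⊓ Subgroup.centralizer {g} : Subgroup G) := by
  classical
  have e : {p : H × G // (p.1 : G) * p.2 = p.2 * (p.1 : G)} ≃
      Σ g : G, (H ⊓ Subgroup.centralizer {g} : Subgroup G) :=
    calc {p : H × G // (p.1 : G) * p.2 = p.2 * (p.1 : G)}
        ≃ {p : G × H // (p.2 : G) * p.1 = p.1 * (p.2 : G)} :=
          (Equiv.prodComm H G).subtypeEquiv (fun p => by rfl)
      _ ≃ Σ g : G, {h : H // (h : G) * g = g * (h : G)} :=
          Equiv.subtypeProdEquivSigmaSubtype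
            (fun (g : G) (h : H) => (h : G) * g = g * (h : G))
      _ ≃ Σ g : G, (H ⊓ Subgroup.centralizer {g} : Subgroup G) :=
          Equiv.sigmaCongrRight (fun g =>
            { toFun := fun h => ⟨(h.1 : G), ⟨h.1.2,
                Subgroup.mem_centralizer_singleton_iff.mpr h.2⟩⟩
              invFun := fun x => ⟨⟨(x : G), x.2.1⟩,
                Subgroup.mem_centralizer_singleton_iff.mp x.2.2⟩
              left_inv := fun h => rfl
              right_inv := fun x => rfl })
  rw [Nat.card_congr e]
  haveI : ∀ g : G, Fintype (H ⊓ Subgroup.centralizer {g} : Subgroup G) :=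
    fun g => Fintype.ofFinite _
  rw [Nat.card_eq_fintype_card, Fintype.card_sigma]
  exact Finset.sum_congr rfl fun g _ => (Nat.card_eq_fintype_card).symm

end Aux

theorem relCommDeg_sup_central (G : Type*) [Group G] [Finite G]
    (H Z : Subgroup G) (hZ : Z ≤ Subgroup.center G) :
    relCommDeg (H ⊔ Z) = relCommDeg H := by
  haveI : Fintype G := Fintype.ofFinite G
  haveI : Z.Normal := ⟨fun n hn g => by
    have h := Subgroup.mem_center_iff.mp (hZ hn) g
    have h2 : g * n * g⁻¹ = n := by rw [h]; group
    rwa [h2]⟩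
  classical
  set C : G → Subgroup G := fun g => Subgroup.centralizer {g} with hC
  -- Z is contained in every centralizer
  have hZC : ∀ g : G, Z ≤ C g := fun g z hz =>
    Subgroup.mem_centralizer_singleton_iff.mpr (Subgroup.mem_center_iff.mp (hZ hz) g).symm
  -- key per-element identity
  have key : ∀ g : G,
      Nat.card ((H ⊔ Z) ⊓ C g : Subgroup G) * Nat.card (H ⊓ Z : Subgroup G) =
        Nat.card (H ⊓ C g : Subgroup G) * Nat.card Z := by
    intro g
    have h1 : (H ⊔ Z) ⊓ C g = (H ⊓ C g) ⊔ Z := by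
      apply le_antisymm
      · rintro x ⟨hx1, hx2⟩
        have : x ∈ (H : Set G) * (Z : Set G) := by
          rw [← Subgroup.mul_normal H Z]; exact hx1
        obtain ⟨h, hh, z, hz, rfl⟩ := this
        have hzC : z ∈ C g := hZC g hz
        have hhC : h ∈ C g := by
          have : h = (h * z) * z⁻¹ := by group
          rw [this]
          exact (C g).mul_mem hx2 ((C g).inv_mem hzC)
        exact Subgroup.mul_mem_sup ⟨hh, hhC⟩ hz
      · apply sup_le
        · exact le_inf (inf_le_left.trans le_sup_left) inf_le_right
        · exact le_inf le_sup_right (hZC g)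
    have h2 : (H ⊓ C g) ⊓ Z = H ⊓ Z := by
      rw [inf_assoc, inf_eq_right.mpr (hZC g)]
    have := card_sup_mul_card_inf (G := G) (H ⊓ C g) Z
    rw [h1, ← h2]
    exact this
  -- sum the identity over g
  have sum_eq :
      Nat.card {p : (H ⊔ Z : Subgroup G) × G // (p.1 : G) * p.2 = p.2 * (p.1 : G)} *
          Nat.card (H ⊓ Z : Subgroup G) =
        Nat.card {p : H × G // (p.1 : G) * p.2 = p.2 * (p.1 : G)} * Nat.card Z := by
    rw [card_comm_pairs (H ⊔ Z), card_comm_pairs H, Finset.sum_mul, Finset.sum_mul]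
    exact Finset.sum_congr rfl fun g _ => key g
  have card_eq := card_sup_mul_card_inf (G := G) H Z
  -- positivity facts
  have hZpos : 0 < Nat.card Z := Nat.card_pos
  have hHZpos : 0 < Nat.card (H ⊓ Z : Subgroup G) := Nat.card_pos
  have hHpos : 0 < Nat.card H := Nat.card_pos
  have hKpos : 0 < Nat.card (H ⊔ Z : Subgroup G) := Nat.card_pos
  have hGpos : 0 < Nat.card G := Nat.card_pos
  -- main cancellation in ℕ
  have main : Nat.card {p : (H ⊔ Z : Subgroup G) × G // (p.1 : G) * p.2 = p.2 * (p.1 : G)} *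
      Nat.card H =
      Nat.card {p : H × G // (p.1 : G) * p.2 = p.2 * (p.1 : G)} *
        Nat.card (H ⊔ Z : Subgroup G) := by
    have h := congrArg₂ (· * ·) sum_eq card_eq.symm
    -- h : (N_K * |H∩Z|) * (|H|*|Z|) = (N_H * |Z|) * (|K|*|H∩Z|)
    have h' : (Nat.card {p : (H ⊔ Z : Subgroup G) × G // (p.1 : G) * p.2 = p.2 * (p.1 : G)} *
        Nat.card H) * (Nat.card (H ⊓ Z : Subgroup G) * Nat.card Z) =
        (Nat.card {p : H × G // (p.1 : G) * p.2 = p.2 * (p.1 : G)} *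
          Nat.card (H ⊔ Z : Subgroup G)) * (Nat.card (H ⊓ Z : Subgroup G) * Nat.card Z) := by
      rw [show ∀ a b c d : ℕ, (a * b) * (c * d) = (a * c) * (b * d) from fun a b c d => by ring,
        h]
      ring
    exact Nat.eq_of_mul_eq_mul_right (Nat.mul_pos hHZpos hZpos) h'
  unfold relCommDeg
  rw [div_eq_div_iff (by positivity) (by positivity)]
  push_cast
  rw [show ∀ a b c : ℚ, a * (b * c) = (a * b) * c from fun a b c => by ring,
    show ∀ a b c : ℚ, a * (b * c) = (a * b) * c from fun a b c => by ring]
  congr 1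
  exact_mod_cast main
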